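/- Let d > 0, α₀ ∈ ℝ, r(α) = √(d / cos(2(α−α₀))) for |α − α₀| < π/4, U(α,β) = r(α)·(cos α cos β, sin α cos β, cos α sin β, sin α sin β), τ₁(α,β) = N(∂U/∂α(α,β)), τ₂(α,β) = N(∂U/∂β(α,β)), and η(α,β) = N(∂U/∂α(α,β)). Then for all t₁, t₂ with α₀ − π/4 < t₁ < t₂ < α₀ + π/4 and every continuously differentiable compactly supported vector field X : ℝ⁴ → ℝ⁴, ∫_{t₁}^{t₂} ∫_0^{2π} ( ⟨τ₁, DX(U(α,β)) τ₁⟩ + ⟨τ₂, DX(U(α,β)) τ₂⟩ ) · r(α) · √((r'(α))² + (r(α))²) dβ dα = ∫_0^{2π} ⟨X(U(t₂,β)), η(t₂,β)⟩ · r(t₂) dβ − ∫_0^{2π} ⟨X(U(t₁,β)), η(t₁,β)⟩ · r(t₁) dβ. (This is the first-variation formula for the ring varifold V^{d,α₀}_{t₁,t₂}.) -/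

import Mathlib

open Real MeasureTheory
open scoped RealInnerProductSpace

/-- `r^{d,α₀}(α) = √(d / cos(2(α−α₀)))`. -/
noncomputable def rr (d α₀ α : ℝ) : ℝ := Real.sqrt (d / Real.cos (2 * (α - α₀)))

/-- The surface parameterization
`U(α,β) = r(α)·(cos α cos β, sin α cos β, cos α sin β, sin α sin β)`. -/
noncomputable def U (d α₀ α β : ℝ) : EuclideanSpace ℝ (Fin 4) :=
  rr d α₀ α •
    (WithLp.toLp 2 ![Real.cos α * Real.cos β, Real.sin α * Real.cos β,
       Real.cos α * Real.sin β, Real.sin α * Real.sin β] :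
      EuclideanSpace ℝ (Fin 4))

/-- Radial unit vector `N(x) = x / ‖x‖`. -/
noncomputable def N (x : EuclideanSpace ℝ (Fin 4)) : EuclideanSpace ℝ (Fin 4) :=
  ‖x‖⁻¹ • x

/-! ### Auxiliary frame vectors -/

noncomputable def ee (a b : ℝ) : EuclideanSpace ℝ (Fin 4) :=
  WithLp.toLp 2 ![Real.cos a * Real.cos b, Real.sin a * Real.cos b,
    Real.cos a * Real.sin b, Real.sin a * Real.sin b]

noncomputable def ea (a b : ℝ) : EuclideanSpace ℝ (Fin 4) :=
  WithLp.toLp 2 ![-(Real.sin a * Real.cos b), Real.cos a * Real.cos b,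
    -(Real.sin a * Real.sin b), Real.cos a * Real.sin b]

noncomputable def eb (a b : ℝ) : EuclideanSpace ℝ (Fin 4) :=
  WithLp.toLp 2 ![-(Real.cos a * Real.sin b), -(Real.sin a * Real.sin b),
    Real.cos a * Real.cos b, Real.sin a * Real.cos b]

noncomputable def cc (α₀ a : ℝ) : ℝ := Real.cos (2 * (a - α₀))
noncomputable def sn (α₀ a : ℝ) : ℝ := Real.sin (2 * (a - α₀))
noncomputable def sA (d α₀ a : ℝ) : ℝ := Real.sqrt d / (cc α₀ a * Real.sqrt (cc α₀ a))
noncomputable def rd (d α₀ a : ℝ) : ℝ :=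
  Real.sqrt d * sn α₀ a / (cc α₀ a * Real.sqrt (cc α₀ a))
noncomputable def tau1 (α₀ a b : ℝ) : EuclideanSpace ℝ (Fin 4) :=
  sn α₀ a • ee a b + cc α₀ a • ea a b

lemma U_eq (d α₀ a b : ℝ) : U d α₀ a b = rr d α₀ a • ee a b := rfl

/-! ### inner product values -/

lemma i_ee_ee (a b : ℝ) : ⟪ee a b, ee a b⟫ = 1 := by
  simp only [ee, PiLp.inner_apply, PiLp.toLp_apply, RCLike.inner_apply, conj_trivial, Fin.sum_univ_four,
    Matrix.cons_val_zero, Matrix.cons_val_one, Matrix.head_cons, Matrix.cons_val_two,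
    Matrix.tail_cons, Matrix.cons_val_three]
  nlinarith [sin_sq_add_cos_sq a, sin_sq_add_cos_sq b]

lemma i_ea_ea (a b : ℝ) : ⟪ea a b, ea a b⟫ = 1 := by
  simp only [ea, PiLp.inner_apply, PiLp.toLp_apply, RCLike.inner_apply, conj_trivial, Fin.sum_univ_four,
    Matrix.cons_val_zero, Matrix.cons_val_one, Matrix.head_cons, Matrix.cons_val_two,
    Matrix.tail_cons, Matrix.cons_val_three]
  nlinarith [sin_sq_add_cos_sq a, sin_sq_add_cos_sq b]

lemma i_eb_eb (a b : ℝ) : ⟪eb a b, eb a b⟫ = 1 := by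
  simp only [eb, PiLp.inner_apply, PiLp.toLp_apply, RCLike.inner_apply, conj_trivial, Fin.sum_univ_four,
    Matrix.cons_val_zero, Matrix.cons_val_one, Matrix.head_cons, Matrix.cons_val_two,
    Matrix.tail_cons, Matrix.cons_val_three]
  nlinarith [sin_sq_add_cos_sq a, sin_sq_add_cos_sq b]

lemma i_ee_ea (a b : ℝ) : ⟪ee a b, ea a b⟫ = 0 := by
  simp only [ee, ea, PiLp.inner_apply, PiLp.toLp_apply, RCLike.inner_apply, conj_trivial, Fin.sum_univ_four,
    Matrix.cons_val_zero, Matrix.cons_val_one, Matrix.head_cons, Matrix.cons_val_two,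
    Matrix.tail_cons, Matrix.cons_val_three]
  ring

/-! ### derivatives of the frame -/

lemma hasDerivAt_euclidean {f : ℝ → EuclideanSpace ℝ (Fin 4)} {f' : EuclideanSpace ℝ (Fin 4)}
    {x : ℝ} (h : ∀ i, HasDerivAt (fun y => f y i) (f' i) x) : HasDerivAt f f' x := by
  have hp : HasDerivAt (fun y => (fun i => f y i : Fin 4 → ℝ)) (fun i => f' i) x :=
    hasDerivAt_pi.2 h
  exact (((EuclideanSpace.equiv (Fin 4) ℝ).symm).toContinuousLinearMap.hasFDerivAt).comp_hasDerivAt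
    x hp

lemma continuous_euclidean {X : Type*} [TopologicalSpace X] {f : X → EuclideanSpace ℝ (Fin 4)}
    (h : ∀ i, Continuous fun p => f p i) : Continuous f := by
  have hp : Continuous (fun y => (fun i => f y i : Fin 4 → ℝ)) := continuous_pi h
  exact (((EuclideanSpace.equiv (Fin 4) ℝ).symm).continuous).comp hp

lemma hasDerivAt_ee_a (a b : ℝ) : HasDerivAt (fun y => ee y b) (ea a b) a := by
  apply hasDerivAt_euclidean
  intro i
  fin_cases i <;> simp only [ee, ea, Matrix.cons_val_zero, Matrix.cons_val_one, Matrix.head_cons,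
    Matrix.cons_val_two, Matrix.tail_cons, Matrix.cons_val_three] <;>
    first
    | simpa [neg_mul] using (Real.hasDerivAt_cos a).mul_const _
    | simpa using (Real.hasDerivAt_sin a).mul_const _

lemma hasDerivAt_ea_a (a b : ℝ) : HasDerivAt (fun y => ea y b) (-ee a b) a := by
  apply hasDerivAt_euclidean
  intro i
  fin_cases i <;> simp only [ee, ea, PiLp.neg_apply, Matrix.cons_val_zero, Matrix.cons_val_one,
    Matrix.head_cons, Matrix.cons_val_two, Matrix.tail_cons, Matrix.cons_val_three] <;>
    first
    | simpa [neg_mul] using ((Real.hasDerivAt_sin a).mul_const (Real.cos b)).neg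
    | simpa [neg_mul] using ((Real.hasDerivAt_sin a).mul_const (Real.sin b)).neg
    | simpa [neg_mul] using (Real.hasDerivAt_cos a).mul_const _
    | exact ((Real.hasDerivAt_sin a).mul_const (Real.cos b)).neg
    | exact ((Real.hasDerivAt_sin a).mul_const (Real.sin b)).neg


lemma i_ee_eb (a b : ℝ) : ⟪ee a b, eb a b⟫ = 0 := by
  simp only [ee, eb, PiLp.inner_apply, PiLp.toLp_apply, RCLike.inner_apply, conj_trivial, Fin.sum_univ_four,
    Matrix.cons_val_zero, Matrix.cons_val_one, Matrix.head_cons, Matrix.cons_val_two,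
    Matrix.tail_cons, Matrix.cons_val_three]
  ring

lemma hasDerivAt_ee_b (a b : ℝ) : HasDerivAt (fun y => ee a y) (eb a b) b := by
  apply hasDerivAt_euclidean
  intro i
  fin_cases i <;> simp only [ee, eb, Matrix.cons_val_zero, Matrix.cons_val_one, Matrix.head_cons,
    Matrix.cons_val_two, Matrix.tail_cons, Matrix.cons_val_three] <;>
    first
    | simpa [mul_comm, mul_neg] using (Real.hasDerivAt_cos b).const_mul (Real.cos a)
    | simpa [mul_comm, mul_neg] using (Real.hasDerivAt_cos b).const_mul (Real.sin a)
    | simpa [mul_comm] using (Real.hasDerivAt_sin b).const_mul (Real.cos a)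
    | simpa [mul_comm] using (Real.hasDerivAt_sin b).const_mul (Real.sin a)

lemma hasDerivAt_eb_b (a b : ℝ) : HasDerivAt (fun y => eb a y) (-ee a b) b := by
  apply hasDerivAt_euclidean
  intro i
  fin_cases i <;> simp only [ee, eb, PiLp.neg_apply, Matrix.cons_val_zero, Matrix.cons_val_one,
    Matrix.head_cons, Matrix.cons_val_two, Matrix.tail_cons, Matrix.cons_val_three] <;>
    first
    | simpa [mul_comm, mul_neg] using ((Real.hasDerivAt_sin b).const_mul (Real.cos a)).neg
    | simpa [mul_comm, mul_neg] using ((Real.hasDerivAt_sin b).const_mul (Real.sin a)).neg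
    | simpa [mul_comm, mul_neg] using (Real.hasDerivAt_cos b).const_mul (Real.cos a)
    | simpa [mul_comm, mul_neg] using (Real.hasDerivAt_cos b).const_mul (Real.sin a)
    | exact ((Real.hasDerivAt_sin b).const_mul (Real.cos a)).neg
    | exact ((Real.hasDerivAt_sin b).const_mul (Real.sin a)).neg

/-! ### continuity of the frame -/

lemma continuous_ee : Continuous fun p : ℝ × ℝ => ee p.1 p.2 := by
  apply continuous_euclidean
  intro i
  have c1 : Continuous fun p : ℝ × ℝ => Real.cos p.1 := Real.continuous_cos.comp continuous_fst
  have c2 : Continuous fun p : ℝ × ℝ => Real.cos p.2 := Real.continuous_cos.comp continuous_snd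
  have s1 : Continuous fun p : ℝ × ℝ => Real.sin p.1 := Real.continuous_sin.comp continuous_fst
  have s2 : Continuous fun p : ℝ × ℝ => Real.sin p.2 := Real.continuous_sin.comp continuous_snd
  fin_cases i
  · exact c1.mul c2
  · exact s1.mul c2
  · exact c1.mul s2
  · exact s1.mul s2

lemma continuous_ea : Continuous fun p : ℝ × ℝ => ea p.1 p.2 := by
  apply continuous_euclidean
  intro i
  have c1 : Continuous fun p : ℝ × ℝ => Real.cos p.1 := Real.continuous_cos.comp continuous_fst
  have c2 : Continuous fun p : ℝ × ℝ => Real.cos p.2 := Real.continuous_cos.comp continuous_snd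
  have s1 : Continuous fun p : ℝ × ℝ => Real.sin p.1 := Real.continuous_sin.comp continuous_fst
  have s2 : Continuous fun p : ℝ × ℝ => Real.sin p.2 := Real.continuous_sin.comp continuous_snd
  fin_cases i
  · exact (s1.mul c2).neg
  · exact c1.mul c2
  · exact (s1.mul s2).neg
  · exact c1.mul s2

lemma continuous_eb : Continuous fun p : ℝ × ℝ => eb p.1 p.2 := by
  apply continuous_euclidean
  intro i
  have c1 : Continuous fun p : ℝ × ℝ => Real.cos p.1 := Real.continuous_cos.comp continuous_fst
  have c2 : Continuous fun p : ℝ × ℝ => Real.cos p.2 := Real.continuous_cos.comp continuous_snd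
  have s1 : Continuous fun p : ℝ × ℝ => Real.sin p.1 := Real.continuous_sin.comp continuous_fst
  have s2 : Continuous fun p : ℝ × ℝ => Real.sin p.2 := Real.continuous_sin.comp continuous_snd
  fin_cases i
  · exact (c1.mul s2).neg
  · exact (s1.mul s2).neg
  · exact c1.mul c2
  · exact s1.mul c2

/-! ### scalar facts -/

section scalars
variable {d α₀ a : ℝ}

lemma sn_sq_add_cc_sq (α₀ a : ℝ) : sn α₀ a ^ 2 + cc α₀ a ^ 2 = 1 := sin_sq_add_cos_sq _

lemma hasDerivAt_cc (α₀ a : ℝ) : HasDerivAt (cc α₀) (-2 * sn α₀ a) a := by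
  have h : HasDerivAt (fun y : ℝ => 2 * (y - α₀)) 2 a := by
    simpa using ((hasDerivAt_id a).sub_const α₀).const_mul 2
  have H := (Real.hasDerivAt_cos (2 * (a - α₀))).comp a h
  have hfun : cc α₀ = Real.cos ∘ fun y : ℝ => 2 * (y - α₀) := rfl
  rw [hfun]
  refine H.congr_deriv ?_
  rw [sn]; ring

lemma hasDerivAt_sn (α₀ a : ℝ) : HasDerivAt (sn α₀) (2 * cc α₀ a) a := by
  have h : HasDerivAt (fun y : ℝ => 2 * (y - α₀)) 2 a := by
    simpa using ((hasDerivAt_id a).sub_const α₀).const_mul 2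
  have H := (Real.hasDerivAt_sin (2 * (a - α₀))).comp a h
  have hfun : sn α₀ = Real.sin ∘ fun y : ℝ => 2 * (y - α₀) := rfl
  rw [hfun]
  refine H.congr_deriv ?_
  rw [cc]; ring

lemma continuous_cc (α₀ : ℝ) : Continuous (cc α₀) := by unfold cc; fun_prop
lemma continuous_sn (α₀ : ℝ) : Continuous (sn α₀) := by unfold sn; fun_prop

lemma rr_eq (hc : 0 < cc α₀ a) (hd : 0 ≤ d) :
    rr d α₀ a = Real.sqrt d / Real.sqrt (cc α₀ a) := by
  rw [rr, Real.sqrt_div hd]; rfl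

lemma rr_pos (hc : 0 < cc α₀ a) (hd : 0 < d) : 0 < rr d α₀ a := by
  rw [rr_eq hc hd.le]
  positivity

lemma sA_pos (hc : 0 < cc α₀ a) (hd : 0 < d) : 0 < sA d α₀ a := by
  rw [sA]; positivity

lemma hasDerivAt_sqrt_cc (hc : 0 < cc α₀ a) :
    HasDerivAt (fun y => Real.sqrt (cc α₀ y)) (-(sn α₀ a) / Real.sqrt (cc α₀ a)) a := by
  have h := (Real.hasDerivAt_sqrt hc.ne').comp a (hasDerivAt_cc α₀ a)
  refine h.congr_deriv ?_
  have h2 : Real.sqrt (cc α₀ a) ≠ 0 := by positivity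
  field_simp

lemma hasDerivAt_rr (hc : 0 < cc α₀ a) (hd : 0 < d) :
    HasDerivAt (rr d α₀) (rd d α₀ a) a := by
  have hs : Real.sqrt (cc α₀ a) ≠ 0 := by positivity
  have h : HasDerivAt (fun y => Real.sqrt d / Real.sqrt (cc α₀ y)) (rd d α₀ a) a := by
    have h0 := (hasDerivAt_const a (Real.sqrt d)).div (hasDerivAt_sqrt_cc hc) hs
    refine h0.congr_deriv ?_
    rw [rd, Real.sq_sqrt hc.le]
    field_simp
    ring
  apply h.congr_of_eventuallyEq
  have hopen : IsOpen {y : ℝ | 0 < cc α₀ y} := isOpen_lt continuous_const (continuous_cc α₀)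
  filter_upwards [hopen.mem_nhds hc] with y hy
  exact rr_eq hy hd.le

lemma sA_mul_sn (hc : 0 < cc α₀ a) : sA d α₀ a * sn α₀ a = rd d α₀ a := by
  rw [sA, rd]; ring

lemma sA_mul_cc (hc : 0 < cc α₀ a) (hd : 0 ≤ d) : sA d α₀ a * cc α₀ a = rr d α₀ a := by
  have hs : Real.sqrt (cc α₀ a) ≠ 0 := by positivity
  rw [sA, rr_eq hc hd]
  field_simp

lemma sq_helper (hc : 0 < cc α₀ a) :
    (cc α₀ a * Real.sqrt (cc α₀ a)) ^ 2 = cc α₀ a ^ 3 := by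
  rw [mul_pow, Real.sq_sqrt hc.le]; ring

lemma sqrt_rd_rr (hc : 0 < cc α₀ a) (hd : 0 < d) :
    Real.sqrt (rd d α₀ a ^ 2 + rr d α₀ a ^ 2) = sA d α₀ a := by
  have hs : (0:ℝ) < Real.sqrt (cc α₀ a) := Real.sqrt_pos.2 hc
  have e1 : rd d α₀ a ^ 2 = d * sn α₀ a ^ 2 / cc α₀ a ^ 3 := by
    rw [rd, div_pow, sq_helper hc, mul_pow, Real.sq_sqrt hd.le]
  have e2 : rr d α₀ a ^ 2 = d / cc α₀ a := by
    rw [rr_eq hc hd.le, div_pow, Real.sq_sqrt hd.le, Real.sq_sqrt hc.le]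
  have e3 : sA d α₀ a ^ 2 = d / cc α₀ a ^ 3 := by
    rw [sA, div_pow, sq_helper hc, Real.sq_sqrt hd.le]
  have key : rd d α₀ a ^ 2 + rr d α₀ a ^ 2 = sA d α₀ a ^ 2 := by
    rw [e1, e2, e3]
    field_simp
    linear_combination sn_sq_add_cc_sq α₀ a
  rw [key, Real.sqrt_sq (sA_pos hc hd).le]

end scalars

/-! ### derivatives of U and the normal fields -/

section geom
variable {d α₀ a : ℝ} (b : ℝ)
variable {X : EuclideanSpace ℝ (Fin 4) → EuclideanSpace ℝ (Fin 4)}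

lemma hasDerivAt_U_a (hc : 0 < cc α₀ a) (hd : 0 < d) :
    HasDerivAt (fun y => U d α₀ y b)
      (rd d α₀ a • ee a b + rr d α₀ a • ea a b) a := by
  have h := (hasDerivAt_rr hc hd).smul (hasDerivAt_ee_a a b)
  simp only [U_eq]
  refine h.congr_deriv ?_
  abel

lemma hasDerivAt_U_b (d : ℝ) : HasDerivAt (fun y => U d α₀ a y) (rr d α₀ a • eb a b) b := by
  have h := (hasDerivAt_ee_b a b).const_smul (rr d α₀ a)
  exact h

lemma norm_va (hc : 0 < cc α₀ a) (hd : 0 < d) :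
    ‖rd d α₀ a • ee a b + rr d α₀ a • ea a b‖ = sA d α₀ a := by
  rw [norm_eq_sqrt_real_inner, real_inner_add_add_self]
  simp only [real_inner_smul_left, real_inner_smul_right, i_ee_ee, i_ea_ea, i_ee_ea]
  rw [show rd d α₀ a * (rd d α₀ a * 1) + 2 * (rr d α₀ a * (rd d α₀ a * 0)) +
      rr d α₀ a * (rr d α₀ a * 1) = rd d α₀ a ^ 2 + rr d α₀ a ^ 2 by ring]
  exact sqrt_rd_rr hc hd

lemma norm_vb (hc : 0 < cc α₀ a) (hd : 0 < d) :
    ‖rr d α₀ a • eb a b‖ = rr d α₀ a := by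
  rw [norm_smul, show ‖eb a b‖ = 1 by
    rw [norm_eq_sqrt_real_inner, i_eb_eb, Real.sqrt_one]]
  simp [abs_of_pos (rr_pos hc hd)]

lemma N_a_eq (hc : 0 < cc α₀ a) (hd : 0 < d) :
    N (deriv (fun y => U d α₀ y b) a) = tau1 α₀ a b := by
  rw [(hasDerivAt_U_a b hc hd).deriv, N, norm_va b hc hd, smul_add, smul_smul, smul_smul]
  have hsA : sA d α₀ a ≠ 0 := (sA_pos hc hd).ne'
  have h1 : (sA d α₀ a)⁻¹ * rd d α₀ a = sn α₀ a := by
    rw [← sA_mul_sn (d := d) hc]; field_simp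
  have h2 : (sA d α₀ a)⁻¹ * rr d α₀ a = cc α₀ a := by
    rw [← sA_mul_cc (d := d) hc hd.le]; field_simp
  rw [h1, h2, tau1]

lemma N_b_eq (hc : 0 < cc α₀ a) (hd : 0 < d) :
    N (deriv (fun y => U d α₀ a y) b) = eb a b := by
  rw [(hasDerivAt_U_b b d).deriv, N, norm_vb b hc hd, smul_smul,
    inv_mul_cancel₀ (rr_pos hc hd).ne', one_smul]

lemma smul_tau1_a (hc : 0 < cc α₀ a) (hd : 0 < d) :
    sA d α₀ a • tau1 α₀ a b = rd d α₀ a • ee a b + rr d α₀ a • ea a b := by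
  rw [tau1, smul_add, smul_smul, smul_smul, sA_mul_sn (d := d) hc, sA_mul_cc (d := d) hc hd.le]

lemma smul_tau1_r :
    rr d α₀ a • tau1 α₀ a b
      = (rr d α₀ a * sn α₀ a) • ee a b + (rr d α₀ a * cc α₀ a) • ea a b := by
  rw [tau1, smul_add, smul_smul, smul_smul]

/-- The α-derivative of the conormal-weighted field `P e + Q e_α` is `s_A e`:
the minimal-surface identity. -/
lemma hasDerivAt_PQ (hc : 0 < cc α₀ a) (hd : 0 < d) :
    HasDerivAt
      (fun y => (rr d α₀ y * sn α₀ y) • ee y b + (rr d α₀ y * cc α₀ y) • ea y b)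
      (sA d α₀ a • ee a b) a := by
  have hP : HasDerivAt (fun y => rr d α₀ y * sn α₀ y)
      (rd d α₀ a * sn α₀ a + rr d α₀ a * (2 * cc α₀ a)) a :=
    (hasDerivAt_rr hc hd).mul (hasDerivAt_sn α₀ a)
  have hQ : HasDerivAt (fun y => rr d α₀ y * cc α₀ y)
      (rd d α₀ a * cc α₀ a + rr d α₀ a * (-2 * sn α₀ a)) a :=
    (hasDerivAt_rr hc hd).mul (hasDerivAt_cc α₀ a)
  have h1 := hP.smul (hasDerivAt_ee_a a b)
  have h2 := hQ.smul (hasDerivAt_ea_a a b)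
  have h := h1.add h2
  refine h.congr_deriv ?_
  have I1 : rd d α₀ a * sn α₀ a + rr d α₀ a * cc α₀ a = sA d α₀ a := by
    rw [← sA_mul_sn (d := d) hc, ← sA_mul_cc (d := d) hc hd.le]
    linear_combination sA d α₀ a * sn_sq_add_cc_sq α₀ a
  have I2 : rd d α₀ a * cc α₀ a = rr d α₀ a * sn α₀ a := by
    rw [← sA_mul_sn (d := d) hc, ← sA_mul_cc (d := d) hc hd.le]; ring
  have expand : (rr d α₀ a * sn α₀ a) • ea a b
        + (rd d α₀ a * sn α₀ a + rr d α₀ a * (2 * cc α₀ a)) • ee a b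
        + ((rr d α₀ a * cc α₀ a) • -ee a b
          + (rd d α₀ a * cc α₀ a + rr d α₀ a * (-2 * sn α₀ a)) • ea a b)
      = (rd d α₀ a * sn α₀ a + rr d α₀ a * cc α₀ a) • ee a b
        + (rr d α₀ a * sn α₀ a + rd d α₀ a * cc α₀ a + rr d α₀ a * (-2 * sn α₀ a)) • ea a b := by
    module
  rw [expand, I1, I2]
  rw [show rr d α₀ a * sn α₀ a + rr d α₀ a * sn α₀ a + rr d α₀ a * (-2 * sn α₀ a) = 0 by ring]
  module

end geom

/-! ### the key derivative identities -/

noncomputable def gA (d α₀ : ℝ) (X : EuclideanSpace ℝ (Fin 4) → EuclideanSpace ℝ (Fin 4))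
    (a b : ℝ) : ℝ :=
  ⟪X (U d α₀ a b), sA d α₀ a • ee a b⟫ +
    ⟪(fderiv ℝ X (U d α₀ a b)) (rd d α₀ a • ee a b + rr d α₀ a • ea a b),
      (rr d α₀ a * sn α₀ a) • ee a b + (rr d α₀ a * cc α₀ a) • ea a b⟫

noncomputable def hB (d α₀ : ℝ) (X : EuclideanSpace ℝ (Fin 4) → EuclideanSpace ℝ (Fin 4))
    (a b : ℝ) : ℝ :=
  sA d α₀ a * (⟪X (U d α₀ a b), -ee a b⟫ +
    ⟪(fderiv ℝ X (U d α₀ a b)) (rr d α₀ a • eb a b), eb a b⟫)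

section keylemmas
variable {d α₀ a : ℝ} (b : ℝ)
variable {X : EuclideanSpace ℝ (Fin 4) → EuclideanSpace ℝ (Fin 4)}

/-- K1 : α-derivative of the boundary integrand. -/
lemma hasDerivAt_G (hX : ContDiff ℝ 1 X) (hc : 0 < cc α₀ a) (hd : 0 < d) :
    HasDerivAt (fun y => ⟪X (U d α₀ y b), N (deriv (fun z => U d α₀ z b) y)⟫ * rr d α₀ y)
      (gA d α₀ X a b) a := by
  have hXd : ∀ z, HasFDerivAt X (fderiv ℝ X z) z := fun z =>
    (hX.differentiable one_ne_zero z).hasFDerivAt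
  have hf : HasDerivAt (fun y => X (U d α₀ y b))
      ((fderiv ℝ X (U d α₀ a b)) (rd d α₀ a • ee a b + rr d α₀ a • ea a b)) a :=
    (hXd (U d α₀ a b)).comp_hasDerivAt a (hasDerivAt_U_a b hc hd)
  have hg := hasDerivAt_PQ b hc hd
  have hnice : HasDerivAt
      (fun y => ⟪X (U d α₀ y b),
        (rr d α₀ y * sn α₀ y) • ee y b + (rr d α₀ y * cc α₀ y) • ea y b⟫)
      (gA d α₀ X a b) a := hf.inner ℝ hg
  apply hnice.congr_of_eventuallyEq
  have hopen : IsOpen {y : ℝ | 0 < cc α₀ y} := isOpen_lt continuous_const (continuous_cc α₀)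
  filter_upwards [hopen.mem_nhds hc] with y hy
  rw [N_a_eq b hy hd, ← smul_tau1_r, real_inner_smul_right, mul_comm]

/-- K2 : β-derivative of the auxiliary field. -/
lemma hasDerivAt_H (hX : ContDiff ℝ 1 X) (hd : 0 < d) :
    HasDerivAt (fun y => sA d α₀ a * ⟪X (U d α₀ a y), eb a y⟫) (hB d α₀ X a b) b := by
  have hXd : HasFDerivAt X (fderiv ℝ X (U d α₀ a b)) (U d α₀ a b) :=
    (hX.differentiable one_ne_zero _).hasFDerivAt
  have hf : HasDerivAt (fun y => X (U d α₀ a y))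
      ((fderiv ℝ X (U d α₀ a b)) (rr d α₀ a • eb a b)) b :=
    hXd.comp_hasDerivAt b (hasDerivAt_U_b b d)
  exact (hf.inner ℝ (hasDerivAt_eb_b a b)).const_mul (sA d α₀ a)

/-- K3 : pointwise identity between the first-variation integrand and
`∂_α G + ∂_β H`. -/
lemma integrand_eq (hc : 0 < cc α₀ a) (hd : 0 < d) :
    (⟪N (deriv (fun z => U d α₀ z b) a),
        fderiv ℝ X (U d α₀ a b) (N (deriv (fun z => U d α₀ z b) a))⟫ +
      ⟪N (deriv (fun z => U d α₀ a z) b),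
        fderiv ℝ X (U d α₀ a b) (N (deriv (fun z => U d α₀ a z) b))⟫) *
      (rr d α₀ a * Real.sqrt ((deriv (rr d α₀) a) ^ 2 + (rr d α₀ a) ^ 2))
    = gA d α₀ X a b + hB d α₀ X a b := by
  rw [N_a_eq b hc hd, N_b_eq b hc hd, (hasDerivAt_rr hc hd).deriv, sqrt_rd_rr hc hd,
    gA, hB, ← smul_tau1_a b hc hd, ← smul_tau1_r, ContinuousLinearMap.map_smul,
    ContinuousLinearMap.map_smul]
  simp only [real_inner_smul_left, real_inner_smul_right, smul_eq_mul, inner_neg_right]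
  rw [real_inner_comm (tau1 α₀ a b) ((fderiv ℝ X (U d α₀ a b)) (tau1 α₀ a b)),
    real_inner_comm (eb a b) ((fderiv ℝ X (U d α₀ a b)) (eb a b))]
  ring

/-- K4 : 2π-periodicity in β. -/
lemma ee_per (a : ℝ) : ee a (2 * π) = ee a 0 := by
  ext i
  fin_cases i <;> simp [ee]

lemma eb_per (a : ℝ) : eb a (2 * π) = eb a 0 := by
  ext i
  fin_cases i <;> simp [eb]

lemma H_per (d α₀ : ℝ) (X : EuclideanSpace ℝ (Fin 4) → EuclideanSpace ℝ (Fin 4)) (a : ℝ) :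
    sA d α₀ a * ⟪X (U d α₀ a (2 * π)), eb a (2 * π)⟫
      = sA d α₀ a * ⟪X (U d α₀ a 0), eb a 0⟫ := by
  rw [U_eq, U_eq, ee_per, eb_per]

end keylemmas

/-! ### continuity -/

section continuity
variable {d α₀ : ℝ} {X : EuclideanSpace ℝ (Fin 4) → EuclideanSpace ℝ (Fin 4)}

lemma contOn_rr (d α₀ : ℝ) : ContinuousOn (rr d α₀) {a | 0 < cc α₀ a} := by
  have : rr d α₀ = fun a => Real.sqrt (d / cc α₀ a) := rfl
  rw [this]
  exact (continuousOn_const.div (continuous_cc α₀).continuousOn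
    fun a ha => ne_of_gt ha).sqrt

lemma contOn_sqrt_cc (α₀ : ℝ) : ContinuousOn (fun a => Real.sqrt (cc α₀ a)) {a | 0 < cc α₀ a} :=
  (continuous_cc α₀).continuousOn.sqrt

lemma contOn_sA (d α₀ : ℝ) : ContinuousOn (sA d α₀) {a | 0 < cc α₀ a} := by
  have : sA d α₀ = fun a => Real.sqrt d / (cc α₀ a * Real.sqrt (cc α₀ a)) := rfl
  rw [this]
  refine continuousOn_const.div ((continuous_cc α₀).continuousOn.mul (contOn_sqrt_cc α₀))
    fun a ha => ?_
  have : (0:ℝ) < cc α₀ a := ha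
  positivity

lemma contOn_rd (d α₀ : ℝ) : ContinuousOn (rd d α₀) {a | 0 < cc α₀ a} := by
  have : rd d α₀ = fun a => Real.sqrt d * sn α₀ a / (cc α₀ a * Real.sqrt (cc α₀ a)) := rfl
  rw [this]
  refine (continuousOn_const.mul (continuous_sn α₀).continuousOn).div
    ((continuous_cc α₀).continuousOn.mul (contOn_sqrt_cc α₀)) fun a ha => ?_
  have : (0:ℝ) < cc α₀ a := ha
  positivity

lemma contOn_fst {f : ℝ → ℝ} (h : ContinuousOn f {a | 0 < cc α₀ a}) :
    ContinuousOn (fun p : ℝ × ℝ => f p.1) {p : ℝ × ℝ | 0 < cc α₀ p.1} :=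
  h.comp continuous_fst.continuousOn fun _ hp => hp

lemma contOn_U (d α₀ : ℝ) :
    ContinuousOn (fun p : ℝ × ℝ => U d α₀ p.1 p.2) {p : ℝ × ℝ | 0 < cc α₀ p.1} := by
  simp only [U_eq]
  exact (contOn_fst (contOn_rr d α₀)).smul continuous_ee.continuousOn

lemma contOn_gA (hX : ContDiff ℝ 1 X) (d α₀ : ℝ) :
    ContinuousOn (fun p : ℝ × ℝ => gA d α₀ X p.1 p.2) {p : ℝ × ℝ | 0 < cc α₀ p.1} := by
  have hXU : ContinuousOn (fun p : ℝ × ℝ => X (U d α₀ p.1 p.2))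
      {p : ℝ × ℝ | 0 < cc α₀ p.1} := hX.continuous.comp_continuousOn (contOn_U d α₀)
  have hDXU : ContinuousOn (fun p : ℝ × ℝ => fderiv ℝ X (U d α₀ p.1 p.2))
      {p : ℝ × ℝ | 0 < cc α₀ p.1} :=
    (hX.continuous_fderiv one_ne_zero).comp_continuousOn (contOn_U d α₀)
  have hsn : Continuous fun p : ℝ × ℝ => sn α₀ p.1 := (continuous_sn α₀).comp continuous_fst
  have hcc : Continuous fun p : ℝ × ℝ => cc α₀ p.1 := (continuous_cc α₀).comp continuous_fst
  have h1 : ContinuousOn (fun p : ℝ × ℝ => sA d α₀ p.1 • ee p.1 p.2)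
      {p : ℝ × ℝ | 0 < cc α₀ p.1} := (contOn_fst (contOn_sA d α₀)).smul continuous_ee.continuousOn
  have h2 : ContinuousOn
      (fun p : ℝ × ℝ => rd d α₀ p.1 • ee p.1 p.2 + rr d α₀ p.1 • ea p.1 p.2)
      {p : ℝ × ℝ | 0 < cc α₀ p.1} :=
    ((contOn_fst (contOn_rd d α₀)).smul continuous_ee.continuousOn).add
      ((contOn_fst (contOn_rr d α₀)).smul continuous_ea.continuousOn)
  have h3 : ContinuousOn
      (fun p : ℝ × ℝ => (rr d α₀ p.1 * sn α₀ p.1) • ee p.1 p.2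
        + (rr d α₀ p.1 * cc α₀ p.1) • ea p.1 p.2) {p : ℝ × ℝ | 0 < cc α₀ p.1} :=
    (((contOn_fst (contOn_rr d α₀)).mul hsn.continuousOn).smul continuous_ee.continuousOn).add
      (((contOn_fst (contOn_rr d α₀)).mul hcc.continuousOn).smul continuous_ea.continuousOn)
  exact (hXU.inner h1).add ((hDXU.clm_apply h2).inner h3)

lemma continuous_ee_b (t : ℝ) : Continuous fun b => ee t b := by
  apply continuous_euclidean
  intro i
  fin_cases i
  · exact continuous_const.mul Real.continuous_cos
  · exact continuous_const.mul Real.continuous_cos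
  · exact continuous_const.mul Real.continuous_sin
  · exact continuous_const.mul Real.continuous_sin

lemma continuous_ea_b (t : ℝ) : Continuous fun b => ea t b := by
  apply continuous_euclidean
  intro i
  fin_cases i
  · exact (continuous_const.mul Real.continuous_cos).neg
  · exact continuous_const.mul Real.continuous_cos
  · exact (continuous_const.mul Real.continuous_sin).neg
  · exact continuous_const.mul Real.continuous_sin

lemma continuous_eb_b (t : ℝ) : Continuous fun b => eb t b := by
  apply continuous_euclidean
  intro i
  fin_cases i
  · exact (continuous_const.mul Real.continuous_sin).neg
  · exact (continuous_const.mul Real.continuous_sin).neg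
  · exact continuous_const.mul Real.continuous_cos
  · exact continuous_const.mul Real.continuous_cos

lemma cont_b_tau1 (hX : ContDiff ℝ 1 X) (d α₀ t : ℝ) :
    Continuous fun b => ⟪X (U d α₀ t b), tau1 α₀ t b⟫ * rr d α₀ t := by
  have hU : Continuous fun b => U d α₀ t b := by
    simp only [U_eq]
    exact (continuous_ee_b t).const_smul (rr d α₀ t)
  have htau : Continuous fun b => tau1 α₀ t b := by
    have : (fun b => tau1 α₀ t b)
        = fun b => sn α₀ t • ee t b + cc α₀ t • ea t b := rfl
    rw [this]
    exact ((continuous_ee_b t).const_smul (sn α₀ t)).add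
      ((continuous_ea_b t).const_smul (cc α₀ t))
  exact (((hX.continuous.comp hU).inner htau)).mul continuous_const

lemma cont_b_hB (hX : ContDiff ℝ 1 X) (d α₀ a : ℝ) :
    Continuous fun b => hB d α₀ X a b := by
  have hU : Continuous fun b => U d α₀ a b := by
    simp only [U_eq]; exact (continuous_ee_b a).const_smul (rr d α₀ a)
  have heb : Continuous fun b => eb a b := continuous_eb_b a
  have hee : Continuous fun b => ee a b := continuous_ee_b a
  have : (fun b => hB d α₀ X a b) = fun b =>
      sA d α₀ a * (⟪X (U d α₀ a b), -ee a b⟫ +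
        ⟪(fderiv ℝ X (U d α₀ a b)) (rr d α₀ a • eb a b), eb a b⟫) := rfl
  rw [this]
  refine continuous_const.mul (Continuous.add ?_ ?_)
  · exact (hX.continuous.comp hU).inner hee.neg
  · exact ((((hX.continuous_fderiv one_ne_zero).comp hU).clm_apply
      (heb.const_smul (rr d α₀ a))).inner heb)

end continuity

section morecont
variable {X : EuclideanSpace ℝ (Fin 4) → EuclideanSpace ℝ (Fin 4)}

lemma cont_b_gA (hX : ContDiff ℝ 1 X) (d α₀ a : ℝ) :
    Continuous fun b => gA d α₀ X a b := by
  have hU : Continuous fun b => U d α₀ a b := by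
    simp only [U_eq]; exact (continuous_ee_b a).const_smul (rr d α₀ a)
  have hee : Continuous fun b => ee a b := continuous_ee_b a
  have hea : Continuous fun b => ea a b := continuous_ea_b a
  have : (fun b => gA d α₀ X a b) = fun b =>
      ⟪X (U d α₀ a b), sA d α₀ a • ee a b⟫ +
        ⟪(fderiv ℝ X (U d α₀ a b)) (rd d α₀ a • ee a b + rr d α₀ a • ea a b),
          (rr d α₀ a * sn α₀ a) • ee a b + (rr d α₀ a * cc α₀ a) • ea a b⟫ := rfl
  rw [this]
  refine Continuous.add ?_ ?_
  · exact (hX.continuous.comp hU).inner (hee.const_smul (sA d α₀ a))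
  · exact (((hX.continuous_fderiv one_ne_zero).comp hU).clm_apply
      ((hee.const_smul (rd d α₀ a)).add (hea.const_smul (rr d α₀ a)))).inner
      ((hee.const_smul (rr d α₀ a * sn α₀ a)).add (hea.const_smul (rr d α₀ a * cc α₀ a)))

lemma continuous_ee_a (b : ℝ) : Continuous fun a => ee a b := by
  apply continuous_euclidean
  intro i
  fin_cases i
  · exact Real.continuous_cos.mul continuous_const
  · exact Real.continuous_sin.mul continuous_const
  · exact Real.continuous_cos.mul continuous_const
  · exact Real.continuous_sin.mul continuous_const

lemma continuous_ea_a (b : ℝ) : Continuous fun a => ea a b := by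
  apply continuous_euclidean
  intro i
  fin_cases i
  · exact (Real.continuous_sin.mul continuous_const).neg
  · exact Real.continuous_cos.mul continuous_const
  · exact (Real.continuous_sin.mul continuous_const).neg
  · exact Real.continuous_cos.mul continuous_const

lemma cont_a_gA (hX : ContDiff ℝ 1 X) (d α₀ b : ℝ) :
    ContinuousOn (fun a => gA d α₀ X a b) {a | 0 < cc α₀ a} := by
  have hU : ContinuousOn (fun a => U d α₀ a b) {a | 0 < cc α₀ a} := by
    simp only [U_eq]
    exact (contOn_rr d α₀).smul (continuous_ee_a b).continuousOn
  have hXU : ContinuousOn (fun a => X (U d α₀ a b)) {a | 0 < cc α₀ a} :=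
    hX.continuous.comp_continuousOn hU
  have hDXU : ContinuousOn (fun a => fderiv ℝ X (U d α₀ a b)) {a | 0 < cc α₀ a} :=
    (hX.continuous_fderiv one_ne_zero).comp_continuousOn hU
  have hee := (continuous_ee_a b).continuousOn (s := {a | 0 < cc α₀ a})
  have hea := (continuous_ea_a b).continuousOn (s := {a | 0 < cc α₀ a})
  have : (fun a => gA d α₀ X a b) = fun a =>
      ⟪X (U d α₀ a b), sA d α₀ a • ee a b⟫ +
        ⟪(fderiv ℝ X (U d α₀ a b)) (rd d α₀ a • ee a b + rr d α₀ a • ea a b),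
          (rr d α₀ a * sn α₀ a) • ee a b + (rr d α₀ a * cc α₀ a) • ea a b⟫ := rfl
  rw [this]
  refine ContinuousOn.add ?_ ?_
  · exact hXU.inner ((contOn_sA d α₀).smul hee)
  · exact (hDXU.clm_apply (((contOn_rd d α₀).smul hee).add ((contOn_rr d α₀).smul hea))).inner
      ((((contOn_rr d α₀).mul (continuous_sn α₀).continuousOn).smul hee).add
        (((contOn_rr d α₀).mul (continuous_cc α₀).continuousOn).smul hea))

end morecont

theorem stmt_13 (d α₀ : ℝ) (hd : 0 < d) (t₁ t₂ : ℝ)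
    (ht₁ : α₀ - π / 4 < t₁) (ht : t₁ < t₂) (ht₂ : t₂ < α₀ + π / 4)
    (X : EuclideanSpace ℝ (Fin 4) → EuclideanSpace ℝ (Fin 4))
    (hX : ContDiff ℝ 1 X) (hXc : HasCompactSupport X) :
    (∫ α in Set.Ioo t₁ t₂,
      ∫ β in Set.Ioo (0 : ℝ) (2 * π),
        (⟪N (deriv (fun a => U d α₀ a β) α),
            fderiv ℝ X (U d α₀ α β) (N (deriv (fun a => U d α₀ a β) α))⟫ +
         ⟪N (deriv (fun b => U d α₀ α b) β),
            fderiv ℝ X (U d α₀ α β) (N (deriv (fun b => U d α₀ α b) β))⟫) *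
          (rr d α₀ α *
            Real.sqrt ((deriv (rr d α₀) α) ^ 2 + (rr d α₀ α) ^ 2)))
    = (∫ β in Set.Ioo (0 : ℝ) (2 * π),
        ⟪X (U d α₀ t₂ β), N (deriv (fun a => U d α₀ a β) t₂)⟫ * rr d α₀ t₂)
      - ∫ β in Set.Ioo (0 : ℝ) (2 * π),
        ⟪X (U d α₀ t₁ β), N (deriv (fun a => U d α₀ a β) t₁)⟫ * rr d α₀ t₁ := by
  have h2π : (0:ℝ) < 2 * π := by positivity
  have ht12 : t₁ ≤ t₂ := ht.le
  have hsub : Set.Icc t₁ t₂ ⊆ {a | 0 < cc α₀ a} := by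
    intro a ha
    have h1 : α₀ - π/4 < a := lt_of_lt_of_le ht₁ ha.1
    have h2 : a < α₀ + π/4 := lt_of_le_of_lt ha.2 ht₂
    have hm : 2 * (a - α₀) ∈ Set.Ioo (-(π/2)) (π/2) := ⟨by linarith, by linarith⟩
    exact Real.cos_pos_of_mem_Ioo hm
  have hc1 : 0 < cc α₀ t₁ := hsub ⟨le_refl t₁, ht12⟩
  have hc2 : 0 < cc α₀ t₂ := hsub ⟨ht12, le_refl t₂⟩
  -- Step 1: rewrite the inner β-integral as ∫ gA
  have key : ∀ a ∈ Set.Ioo t₁ t₂,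
      (∫ β in Set.Ioo (0 : ℝ) (2 * π),
        (⟪N (deriv (fun z => U d α₀ z β) a),
            fderiv ℝ X (U d α₀ a β) (N (deriv (fun z => U d α₀ z β) a))⟫ +
         ⟪N (deriv (fun z => U d α₀ a z) β),
            fderiv ℝ X (U d α₀ a β) (N (deriv (fun z => U d α₀ a z) β))⟫) *
          (rr d α₀ a *
            Real.sqrt ((deriv (rr d α₀) a) ^ 2 + (rr d α₀ a) ^ 2)))
      = ∫ β in Set.Ioo (0 : ℝ) (2 * π), gA d α₀ X a β := by
    intro a ha
    have hca : 0 < cc α₀ a := hsub (Set.Ioo_subset_Icc_self ha)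
    have e1 : Set.EqOn
        (fun b => (⟪N (deriv (fun z => U d α₀ z b) a),
            fderiv ℝ X (U d α₀ a b) (N (deriv (fun z => U d α₀ z b) a))⟫ +
         ⟪N (deriv (fun z => U d α₀ a z) b),
            fderiv ℝ X (U d α₀ a b) (N (deriv (fun z => U d α₀ a z) b))⟫) *
          (rr d α₀ a *
            Real.sqrt ((deriv (rr d α₀) a) ^ 2 + (rr d α₀ a) ^ 2)))
        (fun b => gA d α₀ X a b + hB d α₀ X a b) (Set.Ioo (0:ℝ) (2*π)) :=
      fun b _ => integrand_eq b hca hd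
    rw [setIntegral_congr_fun measurableSet_Ioo e1]
    have higA : IntegrableOn (fun b => gA d α₀ X a b) (Set.Ioo (0:ℝ) (2*π)) volume :=
      (((cont_b_gA hX d α₀ a).continuousOn).integrableOn_compact isCompact_Icc).mono_set
        Set.Ioo_subset_Icc_self
    have hihB : IntegrableOn (fun b => hB d α₀ X a b) (Set.Ioo (0:ℝ) (2*π)) volume :=
      (((cont_b_hB hX d α₀ a).continuousOn).integrableOn_compact isCompact_Icc).mono_set
        Set.Ioo_subset_Icc_self
    rw [integral_add higA hihB]
    have hzero : (∫ b in Set.Ioo (0:ℝ) (2*π), hB d α₀ X a b) = 0 := by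
      have heq : (∫ b in Set.Ioo (0:ℝ) (2*π), hB d α₀ X a b)
          = ∫ b in (0:ℝ)..(2*π), hB d α₀ X a b := by
        rw [intervalIntegral.integral_of_le h2π.le, integral_Ioc_eq_integral_Ioo]
      rw [heq, intervalIntegral.integral_eq_sub_of_hasDerivAt
        (fun b _ => hasDerivAt_H b hX hd) ((cont_b_hB hX d α₀ a).intervalIntegrable _ _)]
      rw [H_per d α₀ X a, sub_self]
    rw [hzero, add_zero]
  rw [setIntegral_congr_fun measurableSet_Ioo key]
  -- Step 2: Fubini swap
  have hprod : Integrable (Function.uncurry fun a b => gA d α₀ X a b)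
      ((volume.restrict (Set.Ioo t₁ t₂)).prod (volume.restrict (Set.Ioo (0:ℝ) (2*π)))) := by
    rw [Measure.prod_restrict]
    have hcompact : IsCompact (Set.Icc t₁ t₂ ×ˢ Set.Icc (0:ℝ) (2*π)) :=
      isCompact_Icc.prod isCompact_Icc
    have hconton : ContinuousOn (Function.uncurry fun a b => gA d α₀ X a b)
        (Set.Icc t₁ t₂ ×ˢ Set.Icc (0:ℝ) (2*π)) :=
      (contOn_gA hX d α₀).mono fun p hp => hsub hp.1
    exact (hconton.integrableOn_compact hcompact).mono_set
      (Set.prod_mono Set.Ioo_subset_Icc_self Set.Ioo_subset_Icc_self)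
  rw [integral_integral_swap hprod]
  -- Step 3: FTC in α
  have inner_ftc : ∀ b : ℝ, (∫ a in Set.Ioo t₁ t₂, gA d α₀ X a b)
      = ⟪X (U d α₀ t₂ b), tau1 α₀ t₂ b⟫ * rr d α₀ t₂
        - ⟪X (U d α₀ t₁ b), tau1 α₀ t₁ b⟫ * rr d α₀ t₁ := by
    intro b
    have hderiv : ∀ a ∈ Set.uIcc t₁ t₂,
        HasDerivAt (fun y => ⟪X (U d α₀ y b), N (deriv (fun z => U d α₀ z b) y)⟫ * rr d α₀ y)
          (gA d α₀ X a b) a := by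
      intro a ha
      rw [Set.uIcc_of_le ht12] at ha
      exact hasDerivAt_G b hX (hsub ha) hd
    have hconta : ContinuousOn (fun a => gA d α₀ X a b) (Set.Icc t₁ t₂) :=
      (cont_a_gA hX d α₀ b).mono hsub
    have hint : IntervalIntegrable (fun a => gA d α₀ X a b) volume t₁ t₂ := by
      apply ContinuousOn.intervalIntegrable
      rwa [Set.uIcc_of_le ht12]
    have hftc := intervalIntegral.integral_eq_sub_of_hasDerivAt hderiv hint
    rw [intervalIntegral.integral_of_le ht12, integral_Ioc_eq_integral_Ioo] at hftc
    rw [hftc, N_a_eq b hc2 hd, N_a_eq b hc1 hd]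
  rw [setIntegral_congr_fun measurableSet_Ioo fun b _ => inner_ftc b]
  -- Step 4: split the integral of the difference
  have hi2 : IntegrableOn (fun b => ⟪X (U d α₀ t₂ b), tau1 α₀ t₂ b⟫ * rr d α₀ t₂)
      (Set.Ioo (0:ℝ) (2*π)) volume :=
    (((cont_b_tau1 hX d α₀ t₂).continuousOn).integrableOn_compact isCompact_Icc).mono_set
      Set.Ioo_subset_Icc_self
  have hi1 : IntegrableOn (fun b => ⟪X (U d α₀ t₁ b), tau1 α₀ t₁ b⟫ * rr d α₀ t₁)
      (Set.Ioo (0:ℝ) (2*π)) volume :=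
    (((cont_b_tau1 hX d α₀ t₁).continuousOn).integrableOn_compact isCompact_Icc).mono_set
      Set.Ioo_subset_Icc_self
  rw [integral_sub hi2 hi1]
  have e2 : (fun b => ⟪X (U d α₀ t₂ b), N (deriv (fun z => U d α₀ z b) t₂)⟫ * rr d α₀ t₂)
      = fun b => ⟪X (U d α₀ t₂ b), tau1 α₀ t₂ b⟫ * rr d α₀ t₂ :=
    funext fun b => by rw [N_a_eq b hc2 hd]
  have e3 : (fun b => ⟪X (U d α₀ t₁ b), N (deriv (fun z => U d α₀ z b) t₁)⟫ * rr d α₀ t₁)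
      = fun b => ⟪X (U d α₀ t₁ b), tau1 α₀ t₁ b⟫ * rr d α₀ t₁ :=
    funext fun b => by rw [N_a_eq b hc1 hd]
  rw [e2, e3]
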